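/- Fix ρ₊, n₊, u₊, μ, A₁, A₂ > 0 and γ, α ≥ 1. There exist constants δ₀ > 0 and C > 0 (depending only on these parameters) such that: if 0 < δ = |u₊ − u₋| ≤ δ₀ with u₋ > 0, and ũ, ṽ : [0,∞) → ℝ are twice continuously differentiable, positive, bounded above and below by positive constants, with ũ(0) = ṽ(0) = u₋, ũ → u₊, ṽ → u₊, ũ_x → 0, ṽ_x → 0 at infinity, |ũ(x) − u₊| ≤ δ₀ and |ṽ(x) − u₊| ≤ δ₀ for all x, satisfying on (0,∞) the reduced stationary system (ρ₊u₊ũ + A₁ρ₊^γu₊^γ ũ^{−γ})_x = (μ ũ_x)_x + (n₊u₊/ṽ)(ṽ − ũ) and (n₊u₊ṽ + A₂n₊^αu₊^α ṽ^{−α})_x = (n₊u₊ ṽ_x/ṽ)_x − (n₊u₊/ṽ)(ṽ − ũ), then the boundary derivatives satisfy |ũ_x(0)| ≤ C|u₋ − u₊| and |ṽ_x(0)| ≤ C|u₋ − u₊|. -/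

import Mathlib

open Filter Topology MeasureTheory Set

noncomputable def Ff (c k p : ℝ) : ℝ → ℝ := fun s => c * s + k * s ^ p

noncomputable def Ff' (c k p : ℝ) : ℝ → ℝ := fun s => c + k * p * s ^ (p - 1)

lemma Ff_hasDeriv (c k p : ℝ) {s : ℝ} (hs : 0 < s) :
    HasDerivAt (Ff c k p) (Ff' c k p s) s := by
  have h1 : HasDerivAt (fun t : ℝ => t ^ p) (p * s ^ (p - 1)) s :=
    Real.hasDerivAt_rpow_const (Or.inl hs.ne')
  have h2 := ((hasDerivAt_id s).const_mul c).add (h1.const_mul k)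
  have h3 : c * 1 + k * (p * s ^ (p - 1)) = Ff' c k p s := by unfold Ff'; ring
  rw [h3] at h2
  exact h2

lemma Ff'_contOn (c k p : ℝ) : ContinuousOn (Ff' c k p) (Set.Ioi 0) := by
  intro s hs
  have h1 : ContinuousAt (fun t : ℝ => t ^ (p - 1)) s :=
    Real.continuousAt_rpow_const s (p - 1) (Or.inl (ne_of_gt hs))
  exact ((continuousAt_const.add ((continuousAt_const.mul h1)))).continuousWithinAt

lemma Ff'_bound {c k p lo s : ℝ} (hc : 0 ≤ c) (hk : 0 ≤ k) (hp : p ≤ 0)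
    (hlo : 0 < lo) (hs : lo ≤ s) :
    |Ff' c k p s| ≤ c + k * (-p) * lo ^ (p - 1) := by
  have h1 : s ^ (p - 1) ≤ lo ^ (p - 1) :=
    Real.rpow_le_rpow_of_nonpos hlo hs (by linarith)
  have h2 : (0:ℝ) ≤ s ^ (p - 1) := Real.rpow_nonneg (by linarith) _
  have h3 : (0:ℝ) ≤ lo ^ (p - 1) := Real.rpow_nonneg hlo.le _
  have h4 := mul_le_mul_of_nonneg_left h1 (mul_nonneg hk (neg_nonneg.mpr hp))
  have h5 : 0 ≤ k * -p * s ^ (p - 1) := mul_nonneg (mul_nonneg hk (neg_nonneg.mpr hp)) h2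
  rw [abs_le]
  unfold Ff'
  constructor <;> nlinarith

lemma abs_sub_le_of_mem_uIcc {a b t : ℝ} (ht : t ∈ Set.uIcc a b) : |t - a| ≤ |b - a| := by
  rcases Set.mem_uIcc.mp ht with ⟨h1, h2⟩ | ⟨h1, h2⟩ <;>
    rcases abs_cases (b - a) with ⟨hb, hb'⟩ | ⟨hb, hb'⟩ <;>
    rcases abs_cases (t - a) with ⟨hta, hta'⟩ | ⟨hta, hta'⟩ <;>
    rw [hb, hta] <;> linarith

lemma diff_bound {f f' : ℝ → ℝ} {a b M : ℝ}
    (hd : ∀ t ∈ Set.uIcc a b, HasDerivAt f (f' t) t)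
    (hcont : ContinuousOn f' (Set.uIcc a b))
    (hM : ∀ t ∈ Set.uIcc a b, |f' t| ≤ M) : |f b - f a| ≤ M * |b - a| := by
  rw [← intervalIntegral.integral_eq_sub_of_hasDerivAt hd (hcont.intervalIntegrable)]
  simpa [Real.norm_eq_abs] using
    intervalIntegral.norm_integral_le_of_norm_le_const
      (f := f') (C := M) (fun t ht => by
        simpa [Real.norm_eq_abs] using hM t (Set.uIoc_subset_uIcc ht))

lemma int_hasDeriv {f : ℝ → ℝ} (hf : ContinuousOn f (Set.Ioi 0)) {a : ℝ} (ha : 0 < a)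
    {s : ℝ} (hs : 0 < s) :
    HasDerivAt (fun u => ∫ t in a..u, f t) (f s) s := by
  apply intervalIntegral.integral_hasDerivAt_right
  · apply (hf.mono ?_).intervalIntegrable
    intro t ht
    exact lt_of_lt_of_le (lt_min ha hs) ht.1
  · exact hf.stronglyMeasurableAtFilter isOpen_Ioi s hs
  · exact (hf s hs).continuousAt (Ioi_mem_nhds hs)

lemma my_ftc {f f' : ℝ → ℝ} {a b : ℝ} (hab : a ≤ b) (hc : ContinuousOn f (Set.Icc a b))
    (hd : ∀ x ∈ Set.Ioo a b, HasDerivAt f (f' x) x) (hi : IntervalIntegrable f' volume a b) :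
    ∫ y in a..b, f' y = f b - f a :=
  intervalIntegral.integral_eq_sub_of_hasDeriv_right_of_le hab hc
    (fun x hx => (hd x hx).hasDerivWithinAt) hi

lemma bdry_sq {g : ℝ → ℝ} (hg : Differentiable ℝ g) (hg' : Continuous (deriv g)) :
    g 0 ^ 2 ≤ 2 * (∫ x in (0:ℝ)..1, g x ^ 2) + ∫ x in (0:ℝ)..1, deriv g x ^ 2 := by
  have hcg : Continuous g := hg.continuous
  have hint1 : ∀ a b : ℝ, IntervalIntegrable (fun x => g x ^ 2) volume a b :=
    fun a b => ((hcg.pow 2).intervalIntegrable a b)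
  have hint2 : ∀ a b : ℝ, IntervalIntegrable (fun x => g x ^ 2 + deriv g x ^ 2) volume a b :=
    fun a b => (((hcg.pow 2).add (hg'.pow 2)).intervalIntegrable a b)
  set J := ∫ x in (0:ℝ)..1, (g x ^ 2 + deriv g x ^ 2) with hJ
  have key : ∀ x ∈ Set.Icc (0:ℝ) 1, g 0 ^ 2 ≤ g x ^ 2 + J := by
    intro x hx
    have hftc : ∫ t in (0:ℝ)..x, (2 * g t * deriv g t) = g x ^ 2 - g 0 ^ 2 := by
      apply intervalIntegral.integral_eq_sub_of_hasDerivAt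
      · intro t _
        have := ((hg t).hasDerivAt).pow 2
        exact this.congr_deriv (by ring)
      · exact ((continuous_const.mul hcg).mul hg').intervalIntegrable 0 x
    have habs : |∫ t in (0:ℝ)..x, (2 * g t * deriv g t)| ≤ ∫ t in (0:ℝ)..x, (g t ^ 2 + deriv g t ^ 2) := by
      refine (intervalIntegral.abs_integral_le_integral_abs hx.1).trans ?_
      apply intervalIntegral.integral_mono_on hx.1
        (((continuous_const.mul hcg).mul hg').abs.intervalIntegrable 0 x) (hint2 0 x)
      intro t _
      have : |2 * g t * deriv g t| = 2 * |g t| * |deriv g t| := by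
        rw [abs_mul, abs_mul]; norm_num
      show |2 * g t * deriv g t| ≤ _
      rw [this]
      nlinarith [sq_abs (g t), sq_abs (deriv g t), sq_nonneg (|g t| - |deriv g t|)]
    have hJsplit : ∫ t in (0:ℝ)..x, (g t ^ 2 + deriv g t ^ 2) ≤ J := by
      have := intervalIntegral.integral_add_adjacent_intervals (hint2 0 x) (hint2 x 1)
      rw [hJ, ← this]
      have hnn : 0 ≤ ∫ t in x..(1:ℝ), (g t ^ 2 + deriv g t ^ 2) :=
        intervalIntegral.integral_nonneg hx.2 (fun u _ => by positivity)
      linarith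
    nlinarith [abs_nonneg (∫ t in (0:ℝ)..x, (2 * g t * deriv g t)),
      neg_abs_le (∫ t in (0:ℝ)..x, (2 * g t * deriv g t)), habs, hJsplit, hftc.symm ▸ habs]
  have hmono := intervalIntegral.integral_mono_on (by norm_num : (0:ℝ) ≤ 1)
    (intervalIntegrable_const (c := g 0 ^ 2))
    ((hint1 0 1).add (intervalIntegrable_const (c := J))) key
  rw [intervalIntegral.integral_const] at hmono
  rw [intervalIntegral.integral_add (hint1 0 1) (intervalIntegrable_const (c := J)),
    intervalIntegral.integral_const] at hmono
  have hJsplit2 : J = (∫ x in (0:ℝ)..1, g x ^ 2) + ∫ x in (0:ℝ)..1, deriv g x ^ 2 := by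
    rw [hJ, intervalIntegral.integral_add (g := fun x => deriv g x ^ 2) (hint1 0 1) ((hg'.pow 2).intervalIntegrable 0 1 :
      IntervalIntegrable (fun x => deriv g x ^ 2) volume 0 1)]
  simp at hmono
  linarith

set_option maxHeartbeats 2000000 in
theorem stmt3 (ρp np up μ A1 A2 γ α : ℝ)
    (hρp : 0 < ρp) (hnp : 0 < np) (hup : 0 < up)
    (hμ : 0 < μ) (hA1 : 0 < A1) (hA2 : 0 < A2) (hγ : 1 ≤ γ) (hα : 1 ≤ α) :
    ∃ δ₀ C : ℝ, 0 < δ₀ ∧ 0 < C ∧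
      ∀ (um : ℝ) (ut vt : ℝ → ℝ),
        0 < um → 0 < |up - um| → |up - um| ≤ δ₀ →
        ContDiff ℝ 2 ut → ContDiff ℝ 2 vt →
        (∀ x ≥ (0:ℝ), 0 < ut x ∧ 0 < vt x) →
        (∃ c1 c2 : ℝ, 0 < c1 ∧ ∀ x ≥ (0:ℝ), c1 ≤ ut x ∧ ut x ≤ c2 ∧ c1 ≤ vt x ∧ vt x ≤ c2) →
        ut 0 = um → vt 0 = um →
        Tendsto ut atTop (nhds up) → Tendsto vt atTop (nhds up) →
        Tendsto (deriv ut) atTop (nhds 0) → Tendsto (deriv vt) atTop (nhds 0) →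
        (∀ x ≥ (0:ℝ), |ut x - up| ≤ δ₀ ∧ |vt x - up| ≤ δ₀) →
        (∀ x > (0:ℝ),
          deriv (fun y => ρp * up * ut y + A1 * ρp ^ γ * up ^ γ * (ut y) ^ (-γ)) x
            = deriv (fun y => μ * deriv ut y) x + (np * up / vt x) * (vt x - ut x)) →
        (∀ x > (0:ℝ),
          deriv (fun y => np * up * vt y + A2 * np ^ α * up ^ α * (vt y) ^ (-α)) x
            = deriv (fun y => np * up * deriv vt y / vt y) x - (np * up / vt x) * (vt x - ut x)) →
        |deriv ut 0| ≤ C * |um - up| ∧ |deriv vt 0| ≤ C * |um - up| := by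
  set K1 := A1 * ρp ^ γ * up ^ γ with hK1def
  set K2 := A2 * np ^ α * up ^ α with hK2def
  have hK1 : 0 < K1 := by rw [hK1def]; positivity
  have hK2 : 0 < K2 := by rw [hK2def]; positivity
  set M1 := ρp * up + K1 * γ * (up / 2) ^ (-γ - 1) with hM1def
  set M2 := np * up + K2 * α * (up / 2) ^ (-α - 1) with hM2def
  have hM1 : 0 < M1 := by rw [hM1def]; positivity
  have hM2 : 0 < M2 := by rw [hM2def]; positivity
  set C1 := 2 * (M1 + M2) with hC1def
  have hC1 : 0 < C1 := by rw [hC1def]; positivity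
  set C4 := 2 * (C1 / μ) + 2 / μ ^ 2 * (M1 ^ 2 * (C1 / μ) + (2 * np) ^ 2 * (3 / (2 * np) * C1))
    with hC4def
  have hC4 : 0 < C4 := by rw [hC4def]; positivity
  set Cu := Real.sqrt C4 with hCudef
  have hCu : 0 < Cu := Real.sqrt_pos.mpr hC4
  set Cv := 3 / (2 * np) * ((M1 + M2) + μ * Cu) with hCvdef
  have hCv : 0 < Cv := by rw [hCvdef]; positivity
  refine ⟨up / 2, Cu + Cv + 1, by positivity, by positivity, ?_⟩
  intro um ut vt hum hd0' hdle' hut2 hvt2 hpos _hbdd hu0 hv0 hulim hvlim hulim' hvlim' hnear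
    heq1 heq2
  have hd0 : 0 < |um - up| := by rwa [abs_sub_comm] at hd0'
  have hdle : |um - up| ≤ up / 2 := by rwa [abs_sub_comm] at hdle'
  have hb : (0 : ℝ) < np * up := by positivity
  -- differentiability package
  have hpack : ∀ f : ℝ → ℝ, ContDiff ℝ 2 f →
      Differentiable ℝ f ∧ Differentiable ℝ (deriv f) ∧ Continuous (deriv (deriv f)) := by
    intro f h
    have h2 : ContDiff ℝ ((1 : WithTop ℕ∞) + 1) f := by norm_num at h ⊢; exact h
    have h3 := contDiff_succ_iff_deriv.mp h2
    exact ⟨h3.1, (contDiff_one_iff_deriv.mp h3.2.2).1, (contDiff_one_iff_deriv.mp h3.2.2).2⟩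
  obtain ⟨hu1, hu2, hcu''⟩ := hpack ut hut2
  obtain ⟨hv1, hv2, hcv''⟩ := hpack vt hvt2
  have hcu : Continuous ut := hu1.continuous
  have hcv : Continuous vt := hv1.continuous
  have hcu' : Continuous (deriv ut) := hu2.continuous
  have hcv' : Continuous (deriv vt) := hv2.continuous
  have hU : ∀ x, HasDerivAt ut (deriv ut x) x := fun x => (hu1 x).hasDerivAt
  have hV : ∀ x, HasDerivAt vt (deriv vt x) x := fun x => (hv1 x).hasDerivAt
  have hU' : ∀ x, HasDerivAt (deriv ut) (deriv (deriv ut) x) x := fun x => (hu2 x).hasDerivAt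
  have hV' : ∀ x, HasDerivAt (deriv vt) (deriv (deriv vt) x) x := fun x => (hv2 x).hasDerivAt
  -- ranges
  have hur : ∀ x, 0 ≤ x → up / 2 ≤ ut x ∧ ut x ≤ 3 * up / 2 := by
    intro x hx
    have h := (hnear x hx).1
    rw [abs_le] at h
    constructor <;> linarith [h.1, h.2]
  have hvr : ∀ x, 0 ≤ x → up / 2 ≤ vt x ∧ vt x ≤ 3 * up / 2 := by
    intro x hx
    have h := (hnear x hx).2
    rw [abs_le] at h
    constructor <;> linarith [h.1, h.2]
  have hupos : ∀ x, 0 ≤ x → 0 < ut x := fun x hx => (hpos x hx).1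
  have hvpos : ∀ x, 0 ≤ x → 0 < vt x := fun x hx => (hpos x hx).2
  have humr : up / 2 ≤ um ∧ um ≤ 3 * up / 2 := by
    have := hur 0 le_rfl; rwa [hu0] at this
  -- abbreviations
  set F' : ℝ → ℝ := Ff' (ρp * up) K1 (-γ) with hF'def
  set G' : ℝ → ℝ := Ff' (np * up) K2 (-α) with hG'def
  set F : ℝ → ℝ := Ff (ρp * up) K1 (-γ) with hFdef
  set G : ℝ → ℝ := Ff (np * up) K2 (-α) with hGdef
  set Φ : ℝ → ℝ := fun s => ∫ t in up..s, F' t * (t - up) with hΦdef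
  set Ψ : ℝ → ℝ := fun s => ∫ t in up..s, G' t * (t - up) with hΨdef
  set W : ℝ → ℝ := fun y => np * up * deriv vt y / vt y with hWdef
  set e : ℝ → ℝ := fun y =>
    μ * deriv ut y * (ut y - up) + W y * (vt y - up) - Φ (ut y) - Ψ (vt y) with hedef
  set D : ℝ → ℝ := fun y =>
    μ * deriv ut y ^ 2 + np * up * deriv vt y ^ 2 / vt y
      + np * up / vt y * (vt y - ut y) ^ 2 with hDdef
  set H : ℝ → ℝ := fun y => μ * deriv ut y + W y - F (ut y) - G (vt y) with hHdef
  -- continuity of the derivative integrands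
  have hF'c : ContinuousOn F' (Set.Ioi 0) := by rw [hF'def]; exact Ff'_contOn _ _ _
  have hG'c : ContinuousOn G' (Set.Ioi 0) := by rw [hG'def]; exact Ff'_contOn _ _ _
  have hΦd : ∀ s, 0 < s → HasDerivAt Φ (F' s * (s - up)) s := by
    intro s hs
    rw [hΦdef]
    exact int_hasDeriv (hF'c.mul ((continuous_id.sub continuous_const).continuousOn)) hup hs
  have hΨd : ∀ s, 0 < s → HasDerivAt Ψ (G' s * (s - up)) s := by
    intro s hs
    rw [hΨdef]
    exact int_hasDeriv (hG'c.mul ((continuous_id.sub continuous_const).continuousOn)) hup hs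
  have hFd : ∀ s : ℝ, 0 < s → HasDerivAt F (F' s) s := by
    intro s hs; rw [hFdef, hF'def]; exact Ff_hasDeriv _ _ _ hs
  have hGd : ∀ s : ℝ, 0 < s → HasDerivAt G (G' s) s := by
    intro s hs; rw [hGdef, hG'def]; exact Ff_hasDeriv _ _ _ hs
  -- reduce the equations to pointwise ODEs
  have hWd : ∀ x, 0 < vt x → HasDerivAt W
      ((np * up * deriv (deriv vt) x * vt x - np * up * deriv vt x * deriv vt x) / vt x ^ 2) x := by
    intro x hvx
    rw [hWdef]
    exact ((hV' x).const_mul (np * up)).div (hV x) hvx.ne'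
  have heqs : ∀ x, 0 < x →
      (F' (ut x) * deriv ut x
          = μ * deriv (deriv ut) x + np * up / vt x * (vt x - ut x)) ∧
      (G' (vt x) * deriv vt x
          = (np * up * deriv (deriv vt) x * vt x - np * up * deriv vt x * deriv vt x) / vt x ^ 2
            - np * up / vt x * (vt x - ut x)) := by
    intro x hx
    have hux := hupos x hx.le
    have hvx := hvpos x hx.le
    have hL1 : HasDerivAt (fun y => ρp * up * ut y + K1 * ut y ^ (-γ))
        (F' (ut x) * deriv ut x) x := by
      rw [hF'def]
      exact (Ff_hasDeriv (ρp * up) K1 (-γ) hux).comp x (hU x)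
    have hR1 : HasDerivAt (fun y => μ * deriv ut y) (μ * deriv (deriv ut) x) x :=
      (hU' x).const_mul μ
    have e1 := heq1 x hx
    rw [hL1.deriv, hR1.deriv] at e1
    have hL2 : HasDerivAt (fun y => np * up * vt y + K2 * vt y ^ (-α))
        (G' (vt x) * deriv vt x) x := by
      rw [hG'def]
      exact (Ff_hasDeriv (np * up) K2 (-α) hvx).comp x (hV x)
    have e2 := heq2 x hx
    rw [hL2.deriv, (hWd x hvx).deriv] at e2
    exact ⟨e1, e2⟩
  -- derivative of the energy and of the conserved quantity
  have heD : ∀ x, 0 < x → HasDerivAt e (D x) x := by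
    intro x hx
    obtain ⟨e1, e2⟩ := heqs x hx
    have hux := hupos x hx.le
    have hvx := hvpos x hx.le
    have h1 : HasDerivAt (fun y => μ * deriv ut y * (ut y - up))
        (μ * deriv (deriv ut) x * (ut x - up) + μ * deriv ut x * deriv ut x) x :=
      ((hU' x).const_mul μ).mul ((hU x).sub_const up)
    have h2 : HasDerivAt (fun y => W y * (vt y - up))
        ((np * up * deriv (deriv vt) x * vt x - np * up * deriv vt x * deriv vt x) / vt x ^ 2
          * (vt x - up) + W x * deriv vt x) x :=
      (hWd x hvx).mul ((hV x).sub_const up)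
    have h3 : HasDerivAt (fun y => Φ (ut y)) (F' (ut x) * (ut x - up) * deriv ut x) x :=
      (hΦd (ut x) hux).comp x (hU x)
    have h4 : HasDerivAt (fun y => Ψ (vt y)) (G' (vt x) * (vt x - up) * deriv vt x) x :=
      (hΨd (vt x) hvx).comp x (hV x)
    have hraw := ((h1.add h2).sub h3).sub h4
    have hfun : HasDerivAt e
        (μ * deriv (deriv ut) x * (ut x - up) + μ * deriv ut x * deriv ut x
          + ((np * up * deriv (deriv vt) x * vt x - np * up * deriv vt x * deriv vt x) / vt x ^ 2
            * (vt x - up) + W x * deriv vt x)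
          - F' (ut x) * (ut x - up) * deriv ut x - G' (vt x) * (vt x - up) * deriv vt x) x := by
      rw [hedef]; exact hraw
    have hval : D x = (μ * deriv (deriv ut) x * (ut x - up) + μ * deriv ut x * deriv ut x
          + ((np * up * deriv (deriv vt) x * vt x - np * up * deriv vt x * deriv vt x) / vt x ^ 2
            * (vt x - up) + W x * deriv vt x)
          - F' (ut x) * (ut x - up) * deriv ut x - G' (vt x) * (vt x - up) * deriv vt x) := by
      simp only [hDdef, hWdef]
      linear_combination (ut x - up) * e1 + (vt x - up) * e2
    rw [← hval] at hfun
    exact hfun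
  have hHD : ∀ x, 0 < x → HasDerivAt H 0 x := by
    intro x hx
    obtain ⟨e1, e2⟩ := heqs x hx
    have hux := hupos x hx.le
    have hvx := hvpos x hx.le
    have h1 : HasDerivAt (fun y => μ * deriv ut y) (μ * deriv (deriv ut) x) x :=
      (hU' x).const_mul μ
    have h3 : HasDerivAt (fun y => F (ut y)) (F' (ut x) * deriv ut x) x :=
      (hFd (ut x) hux).comp x (hU x)
    have h4 : HasDerivAt (fun y => G (vt y)) (G' (vt x) * deriv vt x) x :=
      (hGd (vt x) hvx).comp x (hV x)
    have hraw := ((h1.add (hWd x hvx)).sub h3).sub h4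
    have hfun : HasDerivAt H
        (μ * deriv (deriv ut) x
          + (np * up * deriv (deriv vt) x * vt x - np * up * deriv vt x * deriv vt x) / vt x ^ 2
          - F' (ut x) * deriv ut x - G' (vt x) * deriv vt x) x := by
      rw [hHdef]; exact hraw
    have hval : (0:ℝ) = (μ * deriv (deriv ut) x
          + (np * up * deriv (deriv vt) x * vt x - np * up * deriv vt x * deriv vt x) / vt x ^ 2
          - F' (ut x) * deriv ut x - G' (vt x) * deriv vt x) := by
      linear_combination e1 + e2
    rw [← hval] at hfun
    exact hfun
  -- continuity
  have hWc : ∀ x, 0 ≤ x → ContinuousAt W x := by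
    intro x hx
    rw [hWdef]
    exact (continuousAt_const.mul hcv'.continuousAt).div hcv.continuousAt (hvpos x hx).ne'
  have hecont : ∀ x, 0 ≤ x → ContinuousAt e x := by
    intro x hx
    have h1 : ContinuousAt (fun y => μ * deriv ut y * (ut y - up)) x :=
      (continuousAt_const.mul hcu'.continuousAt).mul (hcu.continuousAt.sub continuousAt_const)
    have h2 : ContinuousAt (fun y => W y * (vt y - up)) x :=
      (hWc x hx).mul (hcv.continuousAt.sub continuousAt_const)
    have h3 : ContinuousAt (fun y => Φ (ut y)) x :=
      ((hΦd (ut x) (hupos x hx)).continuousAt).comp hcu.continuousAt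
    have h4 : ContinuousAt (fun y => Ψ (vt y)) x :=
      ((hΨd (vt x) (hvpos x hx)).continuousAt).comp hcv.continuousAt
    have := ((h1.add h2).sub h3).sub h4
    rw [hedef]; exact this
  have hHcont : ∀ x, 0 ≤ x → ContinuousAt H x := by
    intro x hx
    have h1 : ContinuousAt (fun y => μ * deriv ut y) x :=
      continuousAt_const.mul hcu'.continuousAt
    have h3 : ContinuousAt (fun y => F (ut y)) x :=
      ((hFd (ut x) (hupos x hx)).continuousAt).comp hcu.continuousAt
    have h4 : ContinuousAt (fun y => G (vt y)) x :=
      ((hGd (vt x) (hvpos x hx)).continuousAt).comp hcv.continuousAt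
    have := ((h1.add (hWc x hx)).sub h3).sub h4
    rw [hHdef]; exact this
  have hDcont : ∀ x, 0 ≤ x → ContinuousAt D x := by
    intro x hx
    have hvne := (hvpos x hx).ne'
    have h1 : ContinuousAt (fun y => μ * deriv ut y ^ 2) x :=
      continuousAt_const.mul (hcu'.continuousAt.pow 2)
    have h2 : ContinuousAt (fun y => np * up * deriv vt y ^ 2 / vt y) x :=
      (continuousAt_const.mul (hcv'.continuousAt.pow 2)).div hcv.continuousAt hvne
    have h3 : ContinuousAt (fun y => np * up / vt y * (vt y - ut y) ^ 2) x :=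
      (continuousAt_const.div hcv.continuousAt hvne).mul
        ((hcv.continuousAt.sub hcu.continuousAt).pow 2)
    have := (h1.add h2).add h3
    rw [hDdef]; exact this
  have hDnn : ∀ x, 0 ≤ x → 0 ≤ D x := by
    intro x hx
    have hvx := hvpos x hx
    simp only [hDdef]
    have h1 : (0:ℝ) ≤ μ * deriv ut x ^ 2 := by positivity
    have h2 : (0:ℝ) ≤ np * up * deriv vt x ^ 2 / vt x :=
      div_nonneg (by positivity) hvx.le
    have h3 : (0:ℝ) ≤ np * up / vt x * (vt x - ut x) ^ 2 :=
      mul_nonneg (div_nonneg hb.le hvx.le) (sq_nonneg _)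
    linarith
  have hDint : ∀ a b : ℝ, 0 ≤ a → a ≤ b → IntervalIntegrable D volume a b := by
    intro a b ha hab
    apply ContinuousOn.intervalIntegrable
    rw [Set.uIcc_of_le hab]
    exact fun x hx => (hDcont x (ha.trans hx.1)).continuousWithinAt
  have hftc : ∀ a b : ℝ, 0 ≤ a → a ≤ b → ∫ t in a..b, D t = e b - e a := by
    intro a b ha hab
    exact my_ftc hab (fun x hx => (hecont x (ha.trans hx.1)).continuousWithinAt)
      (fun x hx => heD x (lt_of_le_of_lt ha hx.1)) (hDint a b ha hab)
  -- the conserved quantity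
  have hHconst : ∀ x, 0 ≤ x → H x = H 0 := by
    intro x hx
    rcases hx.eq_or_lt with rfl | hx0
    · rfl
    · have h := my_ftc (f' := fun _ => (0:ℝ)) hx0.le
        (fun y hy => (hHcont y hy.1).continuousWithinAt)
        (fun y hy => hHD y hy.1) intervalIntegrable_const
      simp only [intervalIntegral.integral_const, smul_eq_mul, mul_zero] at h
      linarith
  have hHlim : Tendsto H atTop (𝓝 (μ * 0 + np * up * 0 / up - F up - G up)) := by
    have t1 : Tendsto (fun y => μ * deriv ut y) atTop (𝓝 (μ * 0)) := hulim'.const_mul μ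
    have t2 : Tendsto W atTop (𝓝 (np * up * 0 / up)) := by
      rw [hWdef]
      exact (hvlim'.const_mul (np * up)).div hvlim hup.ne'
    have t3 : Tendsto (fun y => F (ut y)) atTop (𝓝 (F up)) :=
      ((hFd up hup).continuousAt.tendsto).comp hulim
    have t4 : Tendsto (fun y => G (vt y)) atTop (𝓝 (G up)) :=
      ((hGd up hup).continuousAt.tendsto).comp hvlim
    rw [hHdef]
    exact ((t1.add t2).sub t3).sub t4
  have hH0 : H 0 = μ * 0 + np * up * 0 / up - F up - G up := by
    have h1 : Tendsto H atTop (𝓝 (H 0)) :=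
      Tendsto.congr' (by filter_upwards [eventually_ge_atTop 0] with x hx
        using (hHconst x hx).symm) tendsto_const_nhds
    exact tendsto_nhds_unique h1 hHlim
  have hS : μ * deriv ut 0 + np * up * deriv vt 0 / um = F um + G um - F up - G up := by
    have := hH0
    simp only [hHdef, hWdef, hu0, hv0] at this
    have h2 : μ * 0 + np * up * 0 / up = 0 := by ring
    rw [h2] at this
    linarith
  -- bounds on F', G' and the potentials
  have hM1r : ∀ s : ℝ, up / 2 ≤ s → |F' s| ≤ M1 := by
    intro s hs
    rw [hF'def, hM1def]
    have := Ff'_bound (le_of_lt (by positivity : (0:ℝ) < ρp * up)) hK1.le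
      (by linarith : -γ ≤ 0) (by positivity : (0:ℝ) < up / 2) hs
    simpa using this
  have hM2r : ∀ s : ℝ, up / 2 ≤ s → |G' s| ≤ M2 := by
    intro s hs
    rw [hG'def, hM2def]
    have := Ff'_bound (le_of_lt (by positivity : (0:ℝ) < np * up)) hK2.le
      (by linarith : -α ≤ 0) (by positivity : (0:ℝ) < up / 2) hs
    simpa using this
  have hmemIcc : ∀ t ∈ Set.uIcc up um, up / 2 ≤ t := by
    intro t ht
    rcases Set.mem_uIcc.mp ht with ⟨h1, _⟩ | ⟨h1, _⟩ <;> linarith [humr.1]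
  have hFdb : |F um - F up| ≤ M1 * |um - up| := by
    apply diff_bound (f' := F') (fun t ht => hFd t (by linarith [hmemIcc t ht]))
      (hF'c.mono (fun t ht => by simpa using by linarith [hmemIcc t ht] : _))
      (fun t ht => hM1r t (hmemIcc t ht))
  have hGdb : |G um - G up| ≤ M2 * |um - up| := by
    apply diff_bound (f' := G') (fun t ht => hGd t (by linarith [hmemIcc t ht]))
      (hG'c.mono (fun t ht => by simpa using by linarith [hmemIcc t ht] : _))
      (fun t ht => hM2r t (hmemIcc t ht))
  have hSb : |F um + G um - F up - G up| ≤ (M1 + M2) * |um - up| := by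
    have h := abs_add_le (F um - F up) (G um - G up)
    rw [show F um - F up + (G um - G up) = F um + G um - F up - G up from by ring] at h
    refine h.trans ?_
    have h2 := add_le_add hFdb hGdb
    linarith
  have hΦb : |Φ um| ≤ M1 * |um - up| * |um - up| := by
    simp only [hΦdef]
    have hb1 : ∀ t ∈ Set.uIoc up um, ‖F' t * (t - up)‖ ≤ M1 * |um - up| := by
      intro t ht
      have ht' := Set.uIoc_subset_uIcc ht
      rw [Real.norm_eq_abs, abs_mul]
      exact mul_le_mul (hM1r t (hmemIcc t ht')) (abs_sub_le_of_mem_uIcc ht')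
        (abs_nonneg _) hM1.le
    have h := intervalIntegral.norm_integral_le_of_norm_le_const hb1
    rwa [Real.norm_eq_abs] at h
  have hΨb : |Ψ um| ≤ M2 * |um - up| * |um - up| := by
    simp only [hΨdef]
    have hb1 : ∀ t ∈ Set.uIoc up um, ‖G' t * (t - up)‖ ≤ M2 * |um - up| := by
      intro t ht
      have ht' := Set.uIoc_subset_uIcc ht
      rw [Real.norm_eq_abs, abs_mul]
      exact mul_le_mul (hM2r t (hmemIcc t ht')) (abs_sub_le_of_mem_uIcc ht')
        (abs_nonneg _) hM2.le
    have h := intervalIntegral.norm_integral_le_of_norm_le_const hb1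
    rwa [Real.norm_eq_abs] at h
  -- value of the energy at 0 and the key integral bound
  have he0 : e 0 = (um - up) * (F um + G um - F up - G up) - Φ um - Ψ um := by
    simp only [hedef, hWdef, hu0, hv0]
    linear_combination (um - up) * hS
  have he0b : |e 0| ≤ C1 * |um - up| ^ 2 := by
    rw [he0]
    have t1 : |(um - up) * (F um + G um - F up - G up) - Φ um - Ψ um|
        ≤ |(um - up) * (F um + G um - F up - G up)| + |Φ um| + |Ψ um| := by
      have a1 := abs_sub ((um - up) * (F um + G um - F up - G up) - Φ um) (Ψ um)
      have a2 := abs_sub ((um - up) * (F um + G um - F up - G up)) (Φ um)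
      linarith
    rw [abs_mul, abs_sub_comm um up] at t1
    have t2 : |up - um| * |F um + G um - F up - G up| ≤ |um - up| * ((M1 + M2) * |um - up|) := by
      rw [abs_sub_comm up um]
      exact mul_le_mul_of_nonneg_left hSb (abs_nonneg _)
    have hC1e : C1 * |um - up| ^ 2
        = |um - up| * ((M1 + M2) * |um - up|)
          + M1 * |um - up| * |um - up| + M2 * |um - up| * |um - up| := by
      rw [hC1def]; ring
    linarith [t1, t2, hΦb, hΨb]
  have helim : Tendsto e atTop (𝓝 0) := by
    have t1 : Tendsto (fun y => μ * deriv ut y * (ut y - up)) atTop (𝓝 (μ * 0 * (up - up))) :=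
      (hulim'.const_mul μ).mul (hulim.sub_const up)
    have t2 : Tendsto W atTop (𝓝 (np * up * 0 / up)) := by
      rw [hWdef]
      exact (hvlim'.const_mul (np * up)).div hvlim hup.ne'
    have t2' := t2.mul (hvlim.sub_const up)
    have t3 : Tendsto (fun y => Φ (ut y)) atTop (𝓝 (Φ up)) :=
      ((hΦd up hup).continuousAt.tendsto).comp hulim
    have t4 : Tendsto (fun y => Ψ (vt y)) atTop (𝓝 (Ψ up)) :=
      ((hΨd up hup).continuousAt.tendsto).comp hvlim
    have hcomb := ((t1.add t2').sub t3).sub t4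
    have hΦ0 : Φ up = 0 := by simp only [hΦdef]; exact intervalIntegral.integral_same
    have hΨ0 : Ψ up = 0 := by simp only [hΨdef]; exact intervalIntegral.integral_same
    have hval : μ * 0 * (up - up) + np * up * 0 / up * (up - up) - Φ up - Ψ up = 0 := by
      rw [hΦ0, hΨ0]; ring
    rw [hedef, ← hval]
    exact hcomb
  have he1le : e 1 ≤ 0 := by
    apply ge_of_tendsto helim
    filter_upwards [eventually_ge_atTop 1] with y hy
    have h := hftc 1 y zero_le_one hy
    have hnn : 0 ≤ ∫ t in (1:ℝ)..y, D t :=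
      intervalIntegral.integral_nonneg hy (fun u hu => hDnn u (by linarith [hu.1]))
    linarith
  have hID : ∫ t in (0:ℝ)..1, D t ≤ C1 * |um - up| ^ 2 := by
    rw [hftc 0 1 le_rfl zero_le_one]
    have := neg_abs_le (e 0)
    linarith
  -- L² bounds on (0,1)
  -- splitting of the energy integral
  have hci : ∀ f : ℝ → ℝ, (∀ x ∈ Set.Icc (0:ℝ) 1, ContinuousAt f x) →
      IntervalIntegrable f volume 0 1 := by
    intro f h
    apply ContinuousOn.intervalIntegrable
    rw [Set.uIcc_of_le zero_le_one]
    exact fun x hx => (h x hx).continuousWithinAt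
  have hiA : IntervalIntegrable (fun t => μ * deriv ut t ^ 2) volume 0 1 :=
    (continuous_const.mul (hcu'.pow 2)).intervalIntegrable 0 1
  have hiB : IntervalIntegrable (fun t => np * up * deriv vt t ^ 2 / vt t) volume 0 1 :=
    hci _ (fun x hx => (continuousAt_const.mul (hcv'.continuousAt.pow 2)).div
      hcv.continuousAt (hvpos x hx.1).ne')
  have hiC : IntervalIntegrable (fun t => np * up / vt t * (vt t - ut t) ^ 2) volume 0 1 :=
    hci _ (fun x hx => (continuousAt_const.div hcv.continuousAt (hvpos x hx.1).ne').mul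
      ((hcv.continuousAt.sub hcu.continuousAt).pow 2))
  have hsplit : (∫ t in (0:ℝ)..1, D t)
      = μ * (∫ t in (0:ℝ)..1, deriv ut t ^ 2)
        + (∫ t in (0:ℝ)..1, np * up * deriv vt t ^ 2 / vt t)
        + ∫ t in (0:ℝ)..1, np * up / vt t * (vt t - ut t) ^ 2 := by
    simp only [hDdef]
    rw [intervalIntegral.integral_add (hiA.add hiB) hiC,
      intervalIntegral.integral_add hiA hiB, intervalIntegral.integral_const_mul]
  have hnnB : 0 ≤ ∫ t in (0:ℝ)..1, np * up * deriv vt t ^ 2 / vt t :=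
    intervalIntegral.integral_nonneg zero_le_one
      (fun u hu => div_nonneg (by positivity) (hvpos u hu.1).le)
  have hnnC : 0 ≤ ∫ t in (0:ℝ)..1, np * up / vt t * (vt t - ut t) ^ 2 :=
    intervalIntegral.integral_nonneg zero_le_one
      (fun u hu => mul_nonneg (div_nonneg hb.le (hvpos u hu.1).le) (sq_nonneg _))
  have hnnA : 0 ≤ ∫ t in (0:ℝ)..1, deriv ut t ^ 2 :=
    intervalIntegral.integral_nonneg zero_le_one (fun u _ => sq_nonneg _)
  have hE1 : (∫ t in (0:ℝ)..1, deriv ut t ^ 2) ≤ C1 * |um - up| ^ 2 / μ := by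
    rw [le_div_iff₀ hμ]
    linarith only [hID, hsplit, hnnB, hnnC]
  have hE3 : (∫ t in (0:ℝ)..1, (vt t - ut t) ^ 2) ≤ 3 / (2 * np) * (C1 * |um - up| ^ 2) := by
    have hpt : ∀ t ∈ Set.Icc (0:ℝ) 1, (vt t - ut t) ^ 2
        ≤ 3 / (2 * np) * (np * up / vt t * (vt t - ut t) ^ 2) := by
      intro t ht
      have h1 := hvr t ht.1
      have hv := hvpos t ht.1
      have h2 : 2 * np / 3 ≤ np * up / vt t := by
        rw [le_div_iff₀ hv]
        have := mul_le_mul_of_nonneg_left h1.2 (by positivity : (0:ℝ) ≤ 2 * np / 3)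
        linarith only [this]
      have h3 : 1 * (vt t - ut t) ^ 2 ≤ 3 / (2 * np) * (np * up / vt t) * (vt t - ut t) ^ 2 := by
        apply mul_le_mul_of_nonneg_right _ (sq_nonneg _)
        rw [show (1:ℝ) = 3 / (2 * np) * (2 * np / 3) from by field_simp]
        exact mul_le_mul_of_nonneg_left h2 (by positivity)
      calc (vt t - ut t) ^ 2 = 1 * (vt t - ut t) ^ 2 := (one_mul _).symm
        _ ≤ 3 / (2 * np) * (np * up / vt t) * (vt t - ut t) ^ 2 := h3
        _ = 3 / (2 * np) * (np * up / vt t * (vt t - ut t) ^ 2) := by ring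
    have hmono2 := intervalIntegral.integral_mono_on zero_le_one
      (hci _ (fun x _ => (hcv.continuousAt.sub hcu.continuousAt).pow 2))
      (hiC.const_mul (3 / (2 * np))) hpt
    rw [intervalIntegral.integral_const_mul] at hmono2
    have h4 : (∫ t in (0:ℝ)..1, np * up / vt t * (vt t - ut t) ^ 2) ≤ C1 * |um - up| ^ 2 := by
      linarith only [hID, hsplit, hnnB, mul_nonneg hμ.le hnnA]
    refine hmono2.trans ?_
    exact mul_le_mul_of_nonneg_left h4 (by positivity)
  have hptIoc : ∀ t ∈ Set.Ioc (0:ℝ) 1, deriv (deriv ut) t ^ 2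
      ≤ 2 / μ ^ 2 * (M1 ^ 2 * deriv ut t ^ 2 + (2 * np) ^ 2 * (vt t - ut t) ^ 2) := by
    intro t ht
    obtain ⟨et1, _⟩ := heqs t ht.1
    have hv := hvpos t ht.1.le
    have hvb := hvr t ht.1.le
    have hF'b : |F' (ut t)| ≤ M1 := hM1r _ (hur t ht.1.le).1
    have hF'sq : F' (ut t) ^ 2 ≤ M1 ^ 2 :=
      sq_le_sq' (abs_le.mp hF'b).1 (abs_le.mp hF'b).2
    have hφ : (np * up / vt t * (vt t - ut t)) ^ 2 ≤ (2 * np) ^ 2 * (vt t - ut t) ^ 2 := by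
      have hq : np * up / vt t ≤ 2 * np := by
        rw [div_le_iff₀ hv]
        have := mul_le_mul_of_nonneg_left hvb.1 (by positivity : (0:ℝ) ≤ 2 * np)
        linarith only [this]
      have hq0 : 0 ≤ np * up / vt t := div_nonneg hb.le hv.le
      have hqq := mul_le_mul_of_nonneg_right
        (mul_le_mul hq hq hq0 (by positivity : (0:ℝ) ≤ 2 * np)) (sq_nonneg (vt t - ut t))
      calc (np * up / vt t * (vt t - ut t)) ^ 2
          = np * up / vt t * (np * up / vt t) * (vt t - ut t) ^ 2 := by ring
        _ ≤ 2 * np * (2 * np) * (vt t - ut t) ^ 2 := hqq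
        _ = (2 * np) ^ 2 * (vt t - ut t) ^ 2 := by ring
    have heqt : μ * deriv (deriv ut) t
        = F' (ut t) * deriv ut t - np * up / vt t * (vt t - ut t) := by linarith [et1]
    have hsq : (μ * deriv (deriv ut) t) ^ 2
        = (F' (ut t) * deriv ut t - np * up / vt t * (vt t - ut t)) ^ 2 := by rw [heqt]
    rw [show 2 / μ ^ 2 * (M1 ^ 2 * deriv ut t ^ 2 + (2 * np) ^ 2 * (vt t - ut t) ^ 2)
        = 2 * (M1 ^ 2 * deriv ut t ^ 2 + (2 * np) ^ 2 * (vt t - ut t) ^ 2) / μ ^ 2 from by ring,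
      le_div_iff₀ (by positivity : (0:ℝ) < μ ^ 2)]
    have habd : (F' (ut t) * deriv ut t - np * up / vt t * (vt t - ut t)) ^ 2
        ≤ 2 * (F' (ut t) * deriv ut t) ^ 2 + 2 * (np * up / vt t * (vt t - ut t)) ^ 2 := by
      linarith only [sq_nonneg (F' (ut t) * deriv ut t + np * up / vt t * (vt t - ut t))]
    have h5 : F' (ut t) ^ 2 * deriv ut t ^ 2 ≤ M1 ^ 2 * deriv ut t ^ 2 :=
      mul_le_mul_of_nonneg_right hF'sq (sq_nonneg _)
    have h6 : (F' (ut t) * deriv ut t) ^ 2 = F' (ut t) ^ 2 * deriv ut t ^ 2 := by ring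
    have h7 : (μ * deriv (deriv ut) t) ^ 2 = μ ^ 2 * deriv (deriv ut) t ^ 2 := by ring
    have h8 : deriv (deriv ut) t ^ 2 * μ ^ 2 = μ ^ 2 * deriv (deriv ut) t ^ 2 := by ring
    linarith only [hsq, habd, hφ, h5, h6, h7, h8]
  have hpt2 : ∀ t ∈ Set.Icc (0:ℝ) 1, deriv (deriv ut) t ^ 2
      ≤ 2 / μ ^ 2 * (M1 ^ 2 * deriv ut t ^ 2 + (2 * np) ^ 2 * (vt t - ut t) ^ 2) := by
    intro t ht
    rcases ht.1.eq_or_lt with rfl | h0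
    · haveI : (𝓝[Set.Ioc (0:ℝ) 1] (0:ℝ)).NeBot := by
        apply mem_closure_iff_nhdsWithin_neBot.mp
        rw [closure_Ioc (zero_ne_one)]
        exact ⟨le_rfl, zero_le_one⟩
      have hqc : ContinuousAt (fun s => 2 / μ ^ 2 * (M1 ^ 2 * deriv ut s ^ 2
          + (2 * np) ^ 2 * (vt s - ut s) ^ 2) - deriv (deriv ut) s ^ 2) 0 := by
        apply ContinuousAt.sub
        · exact continuousAt_const.mul ((continuousAt_const.mul (hcu'.continuousAt.pow 2)).add
            (continuousAt_const.mul ((hcv.continuousAt.sub hcu.continuousAt).pow 2)))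
        · exact hcu''.continuousAt.pow 2
      have h0' := ge_of_tendsto hqc.continuousWithinAt
        (eventually_mem_nhdsWithin.mono (fun s hs => sub_nonneg.mpr (hptIoc s hs)))
      simp only at h0'
      linarith only [h0']
    · exact hptIoc t ⟨h0, ht.2⟩
  have hE2 : (∫ t in (0:ℝ)..1, deriv (deriv ut) t ^ 2)
      ≤ 2 / μ ^ 2 * (M1 ^ 2 * (C1 * |um - up| ^ 2 / μ)
        + (2 * np) ^ 2 * (3 / (2 * np) * (C1 * |um - up| ^ 2))) := by
    have hiR : IntervalIntegrable (fun t => 2 / μ ^ 2 * (M1 ^ 2 * deriv ut t ^ 2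
        + (2 * np) ^ 2 * (vt t - ut t) ^ 2)) volume 0 1 :=
      (continuous_const.mul ((continuous_const.mul (hcu'.pow 2)).add
        (continuous_const.mul ((hcv.sub hcu).pow 2)))).intervalIntegrable 0 1
    have hmono3 := intervalIntegral.integral_mono_on zero_le_one
      ((hcu''.pow 2).intervalIntegrable 0 1) hiR hpt2
    have hsplit2 : (∫ t in (0:ℝ)..1, 2 / μ ^ 2 * (M1 ^ 2 * deriv ut t ^ 2
          + (2 * np) ^ 2 * (vt t - ut t) ^ 2))
        = 2 / μ ^ 2 * (M1 ^ 2 * (∫ t in (0:ℝ)..1, deriv ut t ^ 2)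
          + (2 * np) ^ 2 * (∫ t in (0:ℝ)..1, (vt t - ut t) ^ 2)) := by
      rw [intervalIntegral.integral_const_mul, intervalIntegral.integral_add
        (f := fun t => M1 ^ 2 * deriv ut t ^ 2) (g := fun t => (2 * np) ^ 2 * (vt t - ut t) ^ 2)
        ((continuous_const.mul (hcu'.pow 2)).intervalIntegrable 0 1 :
          IntervalIntegrable (fun t => M1 ^ 2 * deriv ut t ^ 2) volume 0 1)
        ((continuous_const.mul ((hcv.sub hcu).pow 2)).intervalIntegrable 0 1 :
          IntervalIntegrable (fun t => (2 * np) ^ 2 * (vt t - ut t) ^ 2) volume 0 1),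
        intervalIntegral.integral_const_mul, intervalIntegral.integral_const_mul]
    rw [hsplit2] at hmono3
    refine hmono3.trans ?_
    have hEnn : 0 ≤ ∫ t in (0:ℝ)..1, (vt t - ut t) ^ 2 :=
      intervalIntegral.integral_nonneg zero_le_one (fun u _ => sq_nonneg _)
    gcongr
  -- conclusion for ut
  have hbd := bdry_sq hu2 hcu''
  have hu'0sq : deriv ut 0 ^ 2 ≤ C4 * |um - up| ^ 2 := by
    have hkey : 2 * (C1 * |um - up| ^ 2 / μ)
        + 2 / μ ^ 2 * (M1 ^ 2 * (C1 * |um - up| ^ 2 / μ)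
          + (2 * np) ^ 2 * (3 / (2 * np) * (C1 * |um - up| ^ 2)))
        = C4 * |um - up| ^ 2 := by rw [hC4def]; ring
    calc deriv ut 0 ^ 2
        ≤ 2 * (∫ x in (0:ℝ)..1, deriv ut x ^ 2) + ∫ x in (0:ℝ)..1, deriv (deriv ut) x ^ 2 := hbd
      _ ≤ 2 * (C1 * |um - up| ^ 2 / μ)
          + 2 / μ ^ 2 * (M1 ^ 2 * (C1 * |um - up| ^ 2 / μ)
            + (2 * np) ^ 2 * (3 / (2 * np) * (C1 * |um - up| ^ 2))) :=
          add_le_add (mul_le_mul_of_nonneg_left hE1 (by norm_num)) hE2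
      _ = C4 * |um - up| ^ 2 := hkey
  have hu'0 : |deriv ut 0| ≤ Cu * |um - up| := by
    rw [← Real.sqrt_sq_eq_abs (deriv ut 0), hCudef]
    calc Real.sqrt (deriv ut 0 ^ 2) ≤ Real.sqrt (C4 * |um - up| ^ 2) :=
          Real.sqrt_le_sqrt hu'0sq
      _ = Real.sqrt C4 * |um - up| := by
          rw [Real.sqrt_mul hC4.le, Real.sqrt_sq_eq_abs, abs_abs]
  -- conclusion for vt
  have hv'0 : |deriv vt 0| ≤ Cv * |um - up| := by
    have h2cancel : np * up * deriv vt 0 / um * um = np * up * deriv vt 0 :=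
      div_mul_cancel₀ _ hum.ne'
    have h1 : np * up * deriv vt 0
        = (F um + G um - F up - G up - μ * deriv ut 0) * um := by
      linear_combination um * hS - h2cancel
    have hSm : |F um + G um - F up - G up - μ * deriv ut 0|
        ≤ (M1 + M2) * |um - up| + μ * (Cu * |um - up|) := by
      have ht := abs_sub (F um + G um - F up - G up) (μ * deriv ut 0)
      rw [abs_mul, abs_of_pos hμ] at ht
      have h2 := mul_le_mul_of_nonneg_left hu'0 hμ.le
      linarith only [ht, h2, hSb]
    have h2 : |np * up * deriv vt 0|
        ≤ ((M1 + M2) * |um - up| + μ * (Cu * |um - up|)) * (3 * up / 2) := by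
      rw [h1, abs_mul, abs_of_pos hum]
      apply mul_le_mul hSm humr.2 hum.le
      positivity
    rw [abs_mul, abs_of_pos hb] at h2
    have h3 : ((M1 + M2) * |um - up| + μ * (Cu * |um - up|)) * (3 * up / 2)
        = Cv * |um - up| * (np * up) := by
      rw [hCvdef]; field_simp
    rw [h3] at h2
    have h4 : np * up * (Cv * |um - up|) = Cv * |um - up| * (np * up) := mul_comm _ _
    exact (mul_le_mul_iff_right₀ hb).mp (by linarith only [h2, h4])
  constructor
  · refine hu'0.trans ?_
    have : Cu ≤ Cu + Cv + 1 := by linarith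
    exact mul_le_mul_of_nonneg_right this (abs_nonneg _)
  · refine hv'0.trans ?_
    have : Cv ≤ Cu + Cv + 1 := by linarith
    exact mul_le_mul_of_nonneg_right this (abs_nonneg _)
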